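/- Fix μ ∈ ℝ, D > 0, V ∈ ℝ with μV ≠ 0, V_x ∈ ℝ, and α ∈ [0,1]. For h > 0 set Pe(h) = (μ/D)V·h, Q(h) = (μ/D)V_x·h²/2, Pe⁻(h) = Pe(h) + αQ(h) and P(h) = Pe(h)/2 − αQ(h)/4. Then the function h ↦ [((1 + αQ(h)/2)·exp(P(h)) − (1 + Pe⁻(h)/2))/(Pe⁻(h)·((1 + αQ(h))·exp(Pe(h)) − 1))] / W̃(Pe⁻(h), −αQ(h)/4) tends to 1 as h → 0 from the right, where W̃(z,q) = (exp(z/2 + q) − 1 − z/2)/(z·(exp(z) − 1)) for z ≠ 0. -/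

import Mathlib

/-- `W̃(z,q) = (exp(z/2 + q) − 1 − z/2) / (z (exp z − 1))` (for `z ≠ 0`). -/
noncomputable def Wtilde (z q : ℝ) : ℝ :=
  (Real.exp (z / 2 + q) - 1 - z / 2) / (z * (Real.exp z - 1))

open Real Filter


lemma exp_taylor2' {x : ℝ} (hx : |x| ≤ 1) : |Real.exp x - 1 - x - x^2/2| ≤ |x|^3 := by
  have h := Real.exp_bound hx (n := 3) (by norm_num)
  have hs : ∑ m ∈ Finset.range 3, x ^ m / (m.factorial : ℝ) = 1 + x + x^2/2 := by
    norm_num [Finset.sum_range_succ, Nat.factorial]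
  rw [hs] at h
  have h2 : |Real.exp x - (1 + x + x^2/2)| ≤ |x|^3 * (4/(6*3)) := by
    convert h using 2 <;> norm_num
  calc |Real.exp x - 1 - x - x^2/2| = |Real.exp x - (1 + x + x^2/2)| := by ring_nf
    _ ≤ |x|^3 * (4/(6*3)) := h2
    _ ≤ |x|^3 := by nlinarith [pow_nonneg (abs_nonneg x) 3]

lemma exp_taylor3' {x : ℝ} (hx : |x| ≤ 1) : |Real.exp x - 1 - x - x^2/2 - x^3/6| ≤ |x|^4 := by
  have h := Real.exp_bound hx (n := 4) (by norm_num)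
  have hs : ∑ m ∈ Finset.range 4, x ^ m / (m.factorial : ℝ) = 1 + x + x^2/2 + x^3/6 := by
    norm_num [Finset.sum_range_succ, Nat.factorial]
  rw [hs] at h
  have h2 : |Real.exp x - (1 + x + x^2/2 + x^3/6)| ≤ |x|^4 * (5/(24*4)) := by
    convert h using 2 <;> norm_num
  calc |Real.exp x - 1 - x - x^2/2 - x^3/6| = |Real.exp x - (1 + x + x^2/2 + x^3/6)| := by ring_nf
    _ ≤ |x|^4 * (5/(24*4)) := h2
    _ ≤ |x|^4 := by nlinarith [pow_nonneg (abs_nonneg x) 4]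

lemma hev_punct : ∀ᶠ x : ℝ in nhdsWithin 0 {(0:ℝ)}ᶜ, |x| ≤ 1 ∧ x ≠ 0 := by
  have hev0 : ∀ᶠ x : ℝ in nhds 0, |x| ≤ 1 := by
    filter_upwards [eventually_abs_sub_lt (0:ℝ) one_pos] with x hx
    simpa using hx.le
  exact (hev0.filter_mono nhdsWithin_le_nhds).and self_mem_nhdsWithin

lemma L1' : Tendsto (fun x : ℝ => (Real.exp x - 1)/x) (nhdsWithin 0 {(0:ℝ)}ᶜ) (nhds 1) := by
  have h := hasDerivAt_iff_tendsto_slope.mp (Real.hasDerivAt_exp 0)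
  simp only [Real.exp_zero, slope_def_field] at h
  refine h.congr' ?_
  filter_upwards [self_mem_nhdsWithin] with x hx
  simp [slope_def_field]

lemma tendsto_of_abs_sub_le {f b : ℝ → ℝ} {l : Filter ℝ} {L : ℝ}
    (h : ∀ᶠ x in l, |f x - L| ≤ b x) (hb : Tendsto b l (nhds 0)) :
    Tendsto f l (nhds L) := by
  have h0 : Tendsto (fun x => f x - L) l (nhds 0) := by
    rw [tendsto_zero_iff_abs_tendsto_zero]
    exact squeeze_zero' (Eventually.of_forall (fun x => abs_nonneg _)) h hb
  have := h0.add (tendsto_const_nhds (x := L))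
  simpa using this

lemma abs_tendsto0 : Tendsto (fun x : ℝ => |x|) (nhdsWithin 0 {(0:ℝ)}ᶜ) (nhds 0) := by
  have : Tendsto (fun x : ℝ => x) (nhdsWithin 0 {(0:ℝ)}ᶜ) (nhds 0) :=
    tendsto_nhdsWithin_of_tendsto_nhds tendsto_id
  simpa using this.abs

lemma L2' : Tendsto (fun x : ℝ => (Real.exp x - 1 - x)/x^2) (nhdsWithin 0 {(0:ℝ)}ᶜ) (nhds (1/2)) := by
  apply tendsto_of_abs_sub_le (b := fun x => |x|) _ abs_tendsto0
  filter_upwards [hev_punct] with x hx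
  obtain ⟨hx1, hx0⟩ := hx
  have hb := exp_taylor2' hx1
  have hx2 : (0:ℝ) < x^2 := by positivity
  have heq : (Real.exp x - 1 - x)/x^2 - 1/2 = (Real.exp x - 1 - x - x^2/2)/x^2 := by
    have hx2' : x^2 ≠ 0 := pow_ne_zero _ hx0
    rw [eq_div_iff hx2', sub_mul, div_mul_cancel₀ _ hx2']
    ring
  rw [heq, abs_div, abs_of_pos hx2, div_le_iff₀ hx2]
  calc |Real.exp x - 1 - x - x^2/2| ≤ |x|^3 := hb
    _ = |x| * x^2 := by rw [pow_succ, sq_abs]; ring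
    _ ≤ |x| * x^2 := le_refl _

lemma L3' : Tendsto (fun x : ℝ => (Real.exp x - 1 - x - x^2/2)/x^3) (nhdsWithin 0 {(0:ℝ)}ᶜ) (nhds (1/6)) := by
  apply tendsto_of_abs_sub_le (b := fun x => |x|) _ abs_tendsto0
  filter_upwards [hev_punct] with x hx
  obtain ⟨hx1, hx0⟩ := hx
  have hb := exp_taylor3' hx1
  have hx3 : (0:ℝ) < |x^3| := by positivity
  have hx3' : x^3 ≠ 0 := pow_ne_zero _ hx0
  have heq : (Real.exp x - 1 - x - x^2/2)/x^3 - 1/6 = (Real.exp x - 1 - x - x^2/2 - x^3/6)/x^3 := by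
    rw [eq_div_iff hx3', sub_mul, div_mul_cancel₀ _ hx3']
    ring
  rw [heq, abs_div, div_le_iff₀ hx3]
  calc |Real.exp x - 1 - x - x^2/2 - x^3/6| ≤ |x|^4 := hb
    _ = |x| * |x^3| := by rw [abs_pow x 3]; ring


lemma phi_bound {q : ℝ} (hq : |q| ≤ 1) :
    |(1 + q/2) * Real.exp (-q/4) - Real.exp (q/4)| ≤ q^2 := by
  have h1 : |(-q/4 : ℝ)| ≤ 1 := by rw [abs_div, abs_neg]; simp; nlinarith [abs_nonneg q]
  have h2 : |(q/4 : ℝ)| ≤ 1 := by rw [abs_div]; simp; nlinarith [abs_nonneg q]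
  have hm := Real.abs_exp_sub_one_sub_id_le h1
  have hp := Real.abs_exp_sub_one_sub_id_le h2
  set rm := Real.exp (-q/4) - 1 - (-q/4) with hrm
  set rp := Real.exp (q/4) - 1 - q/4 with hrp
  have em : Real.exp (-q/4) = 1 - q/4 + rm := by rw [hrm]; ring
  have ep : Real.exp (q/4) = 1 + q/4 + rp := by rw [hrp]; ring
  have habs_q := abs_le.mp hq
  have hb : (1 + q/2) * Real.exp (-q/4) - Real.exp (q/4)
      = -q^2/8 + (1 + q/2)*rm - rp := by rw [em, ep]; ring
  rw [hb]
  have hmb : |rm| ≤ q^2/16 := by calc |rm| ≤ (-q/4)^2 := hm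
                                    _ = q^2/16 := by ring
  have hpb : |rp| ≤ q^2/16 := by calc |rp| ≤ (q/4)^2 := hp
                                    _ = q^2/16 := by ring
  have h12 : |1 + q/2| ≤ 3/2 := by
    rw [abs_le]; constructor <;> nlinarith [habs_q.1, habs_q.2]
  have ht : |(1 + q/2)*rm| ≤ 3/2*(q^2/16) := by
    rw [abs_mul]; exact mul_le_mul h12 hmb (abs_nonneg _) (by norm_num)
  obtain ⟨ht1, ht2⟩ := abs_le.mp ht
  obtain ⟨hp1, hp2⟩ := abs_le.mp hpb
  rw [abs_le]
  constructor <;> nlinarith [sq_nonneg q]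

lemma div_form (a b C E p : ℝ) (hp : p ≠ 0) :
    (a/(p*C))/(b/(p*E)) = (a/b)*(E/C) := by
  rw [div_div_div_comm, mul_div_mul_left _ _ hp, div_div_eq_mul_div, div_mul_eq_mul_div,
    div_div, div_mul_div_comm, mul_comm b C, mul_comm a E, mul_div_mul_comm, mul_comm]


noncomputable def FF (c k h : ℝ) : ℝ :=
  (1 + k*h^2/2) * Real.exp (c*h/2 - k*h^2/4) - 1 - c*h/2 - k*h^2/2
noncomputable def GG (c k h : ℝ) : ℝ :=
  Real.exp (c*h/2 + k*h^2/4) - 1 - c*h/2 - k*h^2/2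
noncomputable def CCf (c k h : ℝ) : ℝ := (1 + k*h^2) * Real.exp (c*h) - 1
noncomputable def EEf (c k h : ℝ) : ℝ := Real.exp (c*h + k*h^2) - 1

lemma small_facts (c k : ℝ) (hc : c ≠ 0) :
    ∀ᶠ h in nhdsWithin (0:ℝ) (Set.Ioi 0),
      0 < h ∧ h ≤ 1 ∧ c + k*h ≠ 0 ∧ c/2 + k*h/4 ≠ 0 ∧ |k*h^2| ≤ 1 := by
  have hkpos : (0:ℝ) < |k| + 1 := by positivity
  have hcpos : (0:ℝ) < |c| := abs_pos.mpr hc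
  set δ : ℝ := min (1/(|k|+1)) (|c|/(4*(|k|+1))) with hδ
  have hδpos : 0 < δ := by positivity
  have hev : ∀ᶠ h in nhds (0:ℝ), h < δ := eventually_lt_nhds hδpos
  filter_upwards [hev.filter_mono nhdsWithin_le_nhds, self_mem_nhdsWithin] with h h1 h2
  have hh : 0 < h := h2
  have hd1 : h < 1/(|k|+1) := lt_of_lt_of_le h1 (min_le_left _ _)
  have hd2 : h < |c|/(4*(|k|+1)) := lt_of_lt_of_le h1 (min_le_right _ _)
  have hk1 : |k| * h < |c|/4 := by
    have : |k| * h ≤ (|k|+1) * h := by nlinarith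
    have h3 : (|k|+1) * h < |c|/4 := by
      calc (|k|+1)*h < (|k|+1)*(|c|/(4*(|k|+1))) := by
            exact (mul_lt_mul_iff_right₀ hkpos).mpr hd2
        _ = |c|/4 := by field_simp
    linarith
  have hh1 : h ≤ 1 := by
    have : 1/(|k|+1) ≤ 1 := by rw [div_le_one hkpos]; nlinarith [abs_nonneg k]
    linarith
  refine ⟨hh, hh1, ?_, ?_, ?_⟩
  · intro hcon
    have : |k*h| = |c| := by
      have : k*h = -c := by linarith
      rw [this, abs_neg]
    rw [abs_mul, abs_of_pos hh] at this
    nlinarith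
  · intro hcon
    have : |k*(h/4)| = |c|/2 := by
      have : k*(h/4) = -(c/2) := by linarith
      rw [this, abs_neg, abs_div]
      norm_num
    rw [abs_mul, abs_of_pos (by linarith : (0:ℝ) < h/4)] at this
    have h4 : |k| * (h/4) ≤ (|c|/4)/4 := by nlinarith
    nlinarith
  · rw [abs_mul, abs_pow, abs_of_pos hh]
    have : |k| * h ≤ 1 := by
      have : |k| * h ≤ |k| * (1/(|k|+1)) := by nlinarith [abs_nonneg k]
      have h5 : |k| * (1/(|k|+1)) ≤ 1 := by
        rw [mul_one_div, div_le_one hkpos]; linarith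
      linarith
    nlinarith [abs_nonneg k]



lemma tendsto_punct (c k : ℝ) (hc : c ≠ 0)
    (hev : ∀ᶠ h in nhdsWithin (0:ℝ) (Set.Ioi 0), c*h + k*h^2 ≠ 0) :
    Tendsto (fun h : ℝ => c*h + k*h^2) (nhdsWithin 0 (Set.Ioi 0)) (nhdsWithin 0 {(0:ℝ)}ᶜ) := by
  rw [tendsto_nhdsWithin_iff]
  constructor
  · have hcont : Continuous (fun h : ℝ => c*h + k*h^2) := by continuity
    have := hcont.tendsto' 0 0 (by norm_num)
    exact this.mono_left nhdsWithin_le_nhds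
  · filter_upwards [hev] with h hh
    simpa using hh

lemma hEE_lim (c k : ℝ) (hc : c ≠ 0) :
    Tendsto (fun h : ℝ => (Real.exp (c*h + k*h^2) - 1) / h) (nhdsWithin 0 (Set.Ioi 0)) (nhds c) := by
  have hev : ∀ᶠ h in nhdsWithin (0:ℝ) (Set.Ioi 0), 0 < h ∧ c + k*h ≠ 0 := by
    filter_upwards [small_facts c k hc] with h hh
    exact ⟨hh.1, hh.2.2.1⟩
  have hp : Tendsto (fun h : ℝ => c*h + k*h^2) (nhdsWithin 0 (Set.Ioi 0)) (nhdsWithin 0 {(0:ℝ)}ᶜ) := by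
    apply tendsto_punct c k hc
    filter_upwards [hev] with h ⟨h1, h2⟩
    have : c*h + k*h^2 = h*(c+k*h) := by ring
    rw [this]
    exact mul_ne_zero h1.ne' h2
  have hlin : Tendsto (fun h : ℝ => c + k*h) (nhdsWithin (0:ℝ) (Set.Ioi 0)) (nhds c) := by
    have hcont : Continuous (fun h : ℝ => c + k*h) := by continuity
    exact (hcont.tendsto' 0 c (by norm_num)).mono_left nhdsWithin_le_nhds
  have h1 : Tendsto (fun h : ℝ => (Real.exp (c*h + k*h^2) - 1)/(c*h + k*h^2)) (nhdsWithin 0 (Set.Ioi 0)) (nhds 1) :=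
    L1'.comp hp
  have h2 := h1.mul hlin
  rw [one_mul] at h2
  refine h2.congr' ?_
  filter_upwards [hev] with h ⟨h1, h2⟩
  have hne : c*h + k*h^2 ≠ 0 := by
    have : c*h + k*h^2 = h*(c+k*h) := by ring
    rw [this]; exact mul_ne_zero h1.ne' h2
  rw [div_mul_eq_mul_div, div_eq_div_iff hne h1.ne']
  ring



lemma hCC_lim (c k : ℝ) (hc : c ≠ 0) :
    Tendsto (fun h : ℝ => ((1 + k*h^2) * Real.exp (c*h) - 1) / h)
      (nhdsWithin 0 (Set.Ioi 0)) (nhds c) := by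
  have hz : Tendsto (fun h : ℝ => c*h) (nhdsWithin (0:ℝ) (Set.Ioi 0)) (nhdsWithin 0 {(0:ℝ)}ᶜ) := by
    rw [tendsto_nhdsWithin_iff]
    constructor
    · exact ((continuous_const.mul continuous_id).tendsto' 0 0 (by norm_num)).mono_left nhdsWithin_le_nhds
    · filter_upwards [self_mem_nhdsWithin] with h hh
      simpa using mul_ne_zero hc (ne_of_gt hh)
  have h1 : Tendsto (fun h : ℝ => (Real.exp (c*h) - 1)/(c*h)) (nhdsWithin 0 (Set.Ioi 0)) (nhds 1) :=
    L1'.comp hz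
  have h2 : Tendsto (fun h : ℝ => k*h*Real.exp (c*h)) (nhdsWithin (0:ℝ) (Set.Ioi 0)) (nhds 0) := by
    have hcont : Continuous (fun h : ℝ => k*h*Real.exp (c*h)) := by continuity
    exact (hcont.tendsto' 0 0 (by norm_num)).mono_left nhdsWithin_le_nhds
  have h3 := h2.add (h1.mul (tendsto_const_nhds (x := c)))
  rw [show (0:ℝ) + 1*c = c by ring] at h3
  refine h3.congr' ?_
  filter_upwards [self_mem_nhdsWithin] with h hh
  have hh0 : (h:ℝ) ≠ 0 := ne_of_gt hh
  field_simp
  ring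

lemma hEC_lim (c k : ℝ) (hc : c ≠ 0) :
    Tendsto (fun h : ℝ => (Real.exp (c*h + k*h^2) - 1) / ((1 + k*h^2) * Real.exp (c*h) - 1))
      (nhdsWithin 0 (Set.Ioi 0)) (nhds 1) := by
  have h1 := (hEE_lim c k hc).div (hCC_lim c k hc) hc
  rw [div_self hc] at h1
  refine h1.congr' ?_
  filter_upwards [self_mem_nhdsWithin] with h hh
  have hh0 : (h:ℝ) ≠ 0 := ne_of_gt hh
  show (Real.exp (c*h + k*h^2) - 1)/h / (((1 + k*h^2) * Real.exp (c*h) - 1)/h) = _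
  rw [div_div_div_comm, div_self hh0, div_one]




lemma hu_punct (c k : ℝ) (hc : c ≠ 0) :
    Tendsto (fun h : ℝ => c*h/2 + k*h^2/4) (nhdsWithin 0 (Set.Ioi 0)) (nhdsWithin 0 {(0:ℝ)}ᶜ) := by
  rw [tendsto_nhdsWithin_iff]
  constructor
  · have hcont : Continuous (fun h : ℝ => c*h/2 + k*h^2/4) := by continuity
    exact (hcont.tendsto' 0 0 (by norm_num)).mono_left nhdsWithin_le_nhds
  · filter_upwards [small_facts c k hc] with h ⟨h1, _, _, h4, _⟩
    have : c*h/2 + k*h^2/4 = h * (c/2 + k*h/4) := by ring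
    simp only [Set.mem_compl_iff, Set.mem_singleton_iff, this]
    exact mul_ne_zero h1.ne' h4

lemma hg2_lim (c k : ℝ) (hc : c ≠ 0) :
    Tendsto (fun h : ℝ => GG c k h / h^2) (nhdsWithin 0 (Set.Ioi 0)) (nhds (c^2/8 - k/4)) := by
  have h1 : Tendsto (fun h : ℝ =>
      (Real.exp (c*h/2 + k*h^2/4) - 1 - (c*h/2 + k*h^2/4))/(c*h/2 + k*h^2/4)^2)
      (nhdsWithin 0 (Set.Ioi 0)) (nhds (1/2)) := L2'.comp (hu_punct c k hc)
  have h2 : Tendsto (fun h : ℝ => (c/2 + k*h/4)^2) (nhdsWithin (0:ℝ) (Set.Ioi 0)) (nhds ((c/2)^2)) := by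
    have hcont : Continuous (fun h : ℝ => (c/2 + k*h/4)^2) := by continuity
    exact (hcont.tendsto' 0 ((c/2)^2) (by norm_num)).mono_left nhdsWithin_le_nhds
  have h3 := (h1.mul h2).sub (tendsto_const_nhds (x := k/4))
  rw [show (1:ℝ)/2 * (c/2)^2 - k/4 = c^2/8 - k/4 by ring] at h3
  refine h3.congr' ?_
  filter_upwards [small_facts c k hc] with h ⟨h1, _, _, h4, _⟩
  have hh0 : (h:ℝ) ≠ 0 := ne_of_gt h1
  have hu0 : c*h/2 + k*h^2/4 ≠ 0 := by
    have : c*h/2 + k*h^2/4 = h * (c/2 + k*h/4) := by ring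
    rw [this]; exact mul_ne_zero hh0 h4
  have hw2 : ((c/2+k*h/4):ℝ)^2 ≠ 0 := pow_ne_zero _ h4
  have hh2 : ((h:ℝ))^2 ≠ 0 := pow_ne_zero _ hh0
  show _ = GG c k h / h^2
  rw [GG, show (c*h/2 + k*h^2/4)^2 = h^2*(c/2+k*h/4)^2 from by ring,
    div_mul_eq_mul_div, mul_comm ((h:ℝ)^2) _, ← div_div, mul_div_assoc,
    div_self hw2, mul_one, eq_div_iff hh2, sub_mul, div_mul_cancel₀ _ hh2]
  ring

lemma hg3_lim (c : ℝ) (hc : c ≠ 0) :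
    Tendsto (fun h : ℝ => GG c (c^2/2) h / h^3) (nhdsWithin 0 (Set.Ioi 0)) (nhds (c^3/12)) := by
  set k : ℝ := c^2/2 with hk
  have h1 : Tendsto (fun h : ℝ =>
      (Real.exp (c*h/2 + k*h^2/4) - 1 - (c*h/2 + k*h^2/4) - (c*h/2 + k*h^2/4)^2/2)/(c*h/2 + k*h^2/4)^3)
      (nhdsWithin 0 (Set.Ioi 0)) (nhds (1/6)) := L3'.comp (hu_punct c k hc)
  have h2 : Tendsto (fun h : ℝ => (c/2 + k*h/4)^3) (nhdsWithin (0:ℝ) (Set.Ioi 0)) (nhds ((c/2)^3)) := by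
    have hcont : Continuous (fun h : ℝ => (c/2 + k*h/4)^3) := by continuity
    exact (hcont.tendsto' 0 ((c/2)^3) (by norm_num)).mono_left nhdsWithin_le_nhds
  have h4 : Tendsto (fun h : ℝ => c*k/8 + k^2*h/32) (nhdsWithin (0:ℝ) (Set.Ioi 0)) (nhds (c*k/8)) := by
    have hcont : Continuous (fun h : ℝ => c*k/8 + k^2*h/32) := by continuity
    exact (hcont.tendsto' 0 (c*k/8) (by norm_num)).mono_left nhdsWithin_le_nhds
  have h5 := (h1.mul h2).add h4
  rw [show (1:ℝ)/6 * (c/2)^3 + c*k/8 = c^3/12 by rw [hk]; ring] at h5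
  refine h5.congr' ?_
  filter_upwards [small_facts c k hc] with h ⟨h1, _, _, hw, _⟩
  have hh0 : (h:ℝ) ≠ 0 := ne_of_gt h1
  have hu0 : c*h/2 + k*h^2/4 ≠ 0 := by
    have : c*h/2 + k*h^2/4 = h * (c/2 + k*h/4) := by ring
    rw [this]; exact mul_ne_zero hh0 hw
  have hw3 : ((c/2+k*h/4):ℝ)^3 ≠ 0 := pow_ne_zero _ hw
  have hh3 : ((h:ℝ))^3 ≠ 0 := pow_ne_zero _ hh0
  show _ = GG c k h / h^3
  rw [GG, show (c*h/2 + k*h^2/4)^3 = h^3*(c/2+k*h/4)^3 from by ring,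
    div_mul_eq_mul_div, mul_comm ((h:ℝ)^3) _, ← div_div, mul_div_assoc,
    div_self hw3, mul_one, eq_div_iff hh3, add_mul, div_mul_cancel₀ _ hh3, hk]
  ring



lemma habs_lim (c k : ℝ) (hc : c ≠ 0) :
    Tendsto (fun h : ℝ => |GG c k h| / h^4) (nhdsWithin 0 (Set.Ioi 0)) atTop := by
  by_cases ha : c^2/8 - k/4 = 0
  · have hk : k = c^2/2 := by linarith
    have h3 := ((hg3_lim c hc)).abs
    rw [← hk] at h3
    have hb : |c^3/12| > 0 := abs_pos.mpr (div_ne_zero (pow_ne_zero 3 hc) (by norm_num))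
    have hinv : Tendsto (fun h : ℝ => h⁻¹) (nhdsWithin (0:ℝ) (Set.Ioi 0)) atTop :=
      tendsto_inv_nhdsGT_zero
    have := Tendsto.pos_mul_atTop hb h3 hinv
    refine this.congr' ?_
    filter_upwards [self_mem_nhdsWithin] with h hh
    have hh0 : (0:ℝ) < h := hh
    rw [abs_div, abs_of_pos (by positivity : (0:ℝ) < h^3)]
    rw [mul_comm (|GG c k h| / h^3) h⁻¹, inv_mul_eq_div, div_div]
    norm_num [pow_succ]
  · have h2 := ((hg2_lim c k hc)).abs
    have hb : |c^2/8 - k/4| > 0 := abs_pos.mpr ha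
    have hsq : Tendsto (fun h : ℝ => h^2) (nhdsWithin (0:ℝ) (Set.Ioi 0)) (nhdsWithin 0 (Set.Ioi 0)) := by
      rw [tendsto_nhdsWithin_iff]
      refine ⟨((continuous_pow 2).tendsto' 0 0 (by norm_num)).mono_left nhdsWithin_le_nhds, ?_⟩
      filter_upwards [self_mem_nhdsWithin] with h hh
      have : (0:ℝ) < h := hh
      exact pow_pos this 2
    have hinv : Tendsto (fun h : ℝ => (h^2)⁻¹) (nhdsWithin (0:ℝ) (Set.Ioi 0)) atTop :=
      tendsto_inv_nhdsGT_zero.comp hsq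
    have := Tendsto.pos_mul_atTop hb h2 hinv
    refine this.congr' ?_
    filter_upwards [self_mem_nhdsWithin] with h hh
    have hh0 : (0:ℝ) < h := hh
    rw [abs_div, abs_of_pos (by positivity : (0:ℝ) < h^2)]
    rw [mul_comm (|GG c k h| / h^2) (h^2)⁻¹, inv_mul_eq_div, div_div]
    rw [show (4:ℕ) = 2+2 from rfl, pow_add]



lemma hfg_bound (c k : ℝ) (hc : c ≠ 0) :
    ∀ᶠ h in nhdsWithin (0:ℝ) (Set.Ioi 0),
      |FF c k h - GG c k h| ≤ (Real.exp (|c|/2) * k^2) * h^4 := by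
  filter_upwards [small_facts c k hc] with h ⟨h1, h2, _, _, h5⟩
  have e1 : Real.exp (c*h/2 - k*h^2/4) = Real.exp (c*h/2) * Real.exp (-(k*h^2)/4) := by
    rw [← Real.exp_add]; ring_nf
  have e2 : Real.exp (c*h/2 + k*h^2/4) = Real.exp (c*h/2) * Real.exp ((k*h^2)/4) := by
    rw [← Real.exp_add]
  have hdiff : FF c k h - GG c k h
      = Real.exp (c*h/2) * ((1 + (k*h^2)/2) * Real.exp (-(k*h^2)/4) - Real.exp ((k*h^2)/4)) := by
    rw [FF, GG, e1, e2]; ring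
  rw [hdiff, abs_mul, abs_of_pos (Real.exp_pos _)]
  have hphi := phi_bound h5
  have hexp : Real.exp (c*h/2) ≤ Real.exp (|c|/2) := by
    apply Real.exp_le_exp.mpr
    have : c ≤ |c| := le_abs_self c
    nlinarith [le_abs_self c, abs_nonneg c]
  calc Real.exp (c*h/2) * |(1 + (k*h^2)/2) * Real.exp (-(k*h^2)/4) - Real.exp ((k*h^2)/4)|
      ≤ Real.exp (|c|/2) * (k*h^2)^2 := by
        apply mul_le_mul hexp hphi (abs_nonneg _) (le_of_lt (Real.exp_pos _))
    _ = (Real.exp (|c|/2) * k^2) * h^4 := by ring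

lemma hffgg_lim (c k : ℝ) (hc : c ≠ 0) :
    Tendsto (fun h : ℝ => FF c k h / GG c k h) (nhdsWithin 0 (Set.Ioi 0)) (nhds 1) := by
  have habs := habs_lim c k hc
  have hgne : ∀ᶠ h in nhdsWithin (0:ℝ) (Set.Ioi 0), GG c k h ≠ 0 := by
    filter_upwards [habs.eventually_ge_atTop 1, self_mem_nhdsWithin] with h hh h0
    have h0' : (0:ℝ) < h := h0
    intro hcon
    rw [hcon] at hh
    simp at hh
    have : (0:ℝ) < h^4 := by positivity
    nlinarith [hh]
  set M : ℝ := Real.exp (|c|/2) * k^2 with hM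
  have hbound : Tendsto (fun h : ℝ => M * (|GG c k h|/h^4)⁻¹) (nhdsWithin (0:ℝ) (Set.Ioi 0)) (nhds 0) := by
    have := habs.inv_tendsto_atTop
    have h2 := this.const_mul M
    simpa using h2
  have hr0 : Tendsto (fun h : ℝ => (FF c k h - GG c k h)/GG c k h) (nhdsWithin (0:ℝ) (Set.Ioi 0)) (nhds 0) := by
    rw [tendsto_zero_iff_abs_tendsto_zero]
    apply squeeze_zero' (Eventually.of_forall (fun x => abs_nonneg _)) _ hbound
    filter_upwards [hfg_bound c k hc, hgne, self_mem_nhdsWithin] with h hb hg h0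
    have h0' : (0:ℝ) < h := h0
    have hgpos : 0 < |GG c k h| := abs_pos.mpr hg
    have hM0 : 0 ≤ M := by
      rw [hM]; positivity
    have hb' : |FF c k h - GG c k h| ≤ M * h^4 := by rw [hM]; linarith [hb]
    calc |(FF c k h - GG c k h)/GG c k h| = |FF c k h - GG c k h|/|GG c k h| := abs_div _ _
      _ ≤ (M * h^4)/|GG c k h| := (div_le_div_iff_of_pos_right hgpos).mpr hb'
      _ = M * (|GG c k h|/h^4)⁻¹ := by rw [inv_div, mul_div_assoc']
  have := hr0.add (tendsto_const_nhds (x := (1:ℝ)))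
  rw [zero_add] at this
  refine this.congr' ?_
  filter_upwards [hgne] with h hg
  rw [div_add' _ _ _ hg]
  congr 1
  ring

theorem asymptotic_sjp1_coefficient_minus (μ D V Vx α : ℝ)
    (hD : D > 0) (hμV : μ * V ≠ 0) (hα : α ∈ Set.Icc (0:ℝ) 1) :
    Filter.Tendsto
      (fun h : ℝ =>
        let Pe := (μ / D) * V * h
        let Q := (μ / D) * Vx * h ^ 2 / 2
        let Pem := Pe + α * Q
        let P := Pe / 2 - α * Q / 4
        (((1 + α * Q / 2) * Real.exp P - (1 + Pem / 2)) /
          (Pem * ((1 + α * Q) * Real.exp Pe - 1))) /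
          Wtilde Pem (-(α * Q) / 4))
      (nhdsWithin 0 (Set.Ioi 0)) (nhds 1) := by
  have hμ : μ ≠ 0 := fun hcon => hμV (by rw [hcon]; ring)
  have hV : V ≠ 0 := fun hcon => hμV (by rw [hcon]; ring)
  set c : ℝ := μ / D * V with hc_def
  set k : ℝ := α * (μ / D * Vx) / 2 with hk_def
  have hc : c ≠ 0 := mul_ne_zero (div_ne_zero hμ hD.ne') hV
  have hmain := (hffgg_lim c k hc).mul (hEC_lim c k hc)
  rw [mul_one] at hmain
  refine hmain.congr' ?_
  filter_upwards [small_facts c k hc] with h ⟨h1, h2, h3, h4, h5⟩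
  have hp : c*h + k*h^2 ≠ 0 := by
    have : c*h + k*h^2 = h*(c+k*h) := by ring
    rw [this]; exact mul_ne_zero h1.ne' h3
  show FF c k h / GG c k h * _ = _
  simp only []
  have hq : ∀ x : ℝ, α * (μ / D * Vx * h ^ 2 / 2) = k * h^2 := by
    intro x; rw [hk_def]; ring
  rw [Wtilde]
  rw [hq 0]
  rw [show c * h + k * h ^ 2 = c*h + k*h^2 from rfl]
  rw [show (c * h + k * h ^ 2) / 2 + -(k * h ^ 2) / 4 = c*h/2 + k*h^2/4 from by ring]
  rw [show c * h / 2 - k * h ^ 2 / 4 = c*h/2 - k*h^2/4 from rfl]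
  rw [div_form ((1 + k * h ^ 2 / 2) * Real.exp (c * h / 2 - k * h ^ 2 / 4) - (1 + (c * h + k * h ^ 2) / 2))
      (Real.exp (c * h / 2 + k * h ^ 2 / 4) - 1 - (c * h + k * h ^ 2) / 2)
      ((1 + k * h ^ 2) * Real.exp (c * h) - 1)
      (Real.exp (c * h + k * h ^ 2) - 1)
      (c * h + k * h ^ 2) hp]
  rw [FF, GG]
  ring
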